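/- Under the stated assumptions, for any measurable selection (ℓ̂, ĥ) of a minimizer over 𝔥_b² of (ℓ, h) ↦ ∫_{I₀} |b̂_{ℓ,h}(x) − b̂(x)| dx, one has ∫_{I₀} E(|b̂_{ℓ̂,ĥ}(x) − b(x)|) dx ≤ min_{(ℓ,h)∈𝔥_b²} { ∫_{I₀} E(|b̂_{ℓ,h}(x) − b(x)|) dx } + 2 (r₀ − l₀)^{1/2} R(b̂)^{1/2}. -/

import Mathlib

open MeasureTheory

/-- The rescaled kernel `K_η(x) = η⁻¹ K(x/η)`. -/
noncomputable def Kh (K : ℝ → ℝ) (η x : ℝ) : ℝ := η⁻¹ * K (x / η)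

/-- The estimator `𝔟̂_h⁻¹(w) = l₀ - 2ε + ∫_{I_{2ε}} ∫_{-∞}^{-w} K_h(-g(z) - y) dy dz`
of the inverse of `b`, computed from an estimation `g` of `b`. -/
noncomputable def binvEst (K : ℝ → ℝ) (l₀ r₀ ε h : ℝ) (g : ℝ → ℝ) (w : ℝ) : ℝ :=
  (l₀ - 2 * ε) +
    ∫ z in Set.Icc (l₀ - 2 * ε) (r₀ + 2 * ε), ∫ y in Set.Iic (-w), Kh K h (-(g z) - y)

/-- The strictly decreasing estimator
`lo + ∫_{lo}^{hi} ∫_{-∞}^{-x} K_ℓ(-𝔟̂_h⁻¹(z) - y) dy dz`. -/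
noncomputable def monoEst (K : ℝ → ℝ) (l₀ r₀ ε ℓ h lo hi : ℝ) (g : ℝ → ℝ) (x : ℝ) : ℝ :=
  lo + ∫ z in lo..hi, ∫ y in Set.Iic (-x), Kh K ℓ (-(binvEst K l₀ r₀ ε h g z) - y)




/-- Substitution `u = a - y` in a set integral. -/
lemma integral_Iic_comp_sub (f : ℝ → ℝ) (a t : ℝ) :
    (∫ y in Set.Iic t, f (a - y)) = ∫ u in Set.Ici (a - t), f u := by
  have hmp : MeasurePreserving (fun y : ℝ => a - y) volume volume :=
    Measure.measurePreserving_sub_left volume a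
  have hemb : MeasurableEmbedding (fun y : ℝ => a - y) := by
    have h1 : (fun y : ℝ => a - y) = (fun y : ℝ => a + y) ∘ (fun y : ℝ => -y) := by
      funext y; simp [sub_eq_add_neg]
    rw [h1]
    exact (Homeomorph.addLeft a).measurableEmbedding.comp
      (Homeomorph.neg ℝ).measurableEmbedding
  have hpre : (fun y : ℝ => a - y) ⁻¹' (Set.Ici (a - t)) = Set.Iic t := by
    ext y; simp
  calc (∫ y in Set.Iic t, f (a - y))
      = ∫ y in (fun y : ℝ => a - y) ⁻¹' (Set.Ici (a - t)), f (a - y) := by rw [hpre]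
    _ = ∫ u in Set.Ici (a - t), f u := hmp.setIntegral_preimage_emb hemb f _

/-- Cauchy–Schwarz-type bound. -/
lemma integral_le_sqrt_mul_sqrt {α : Type*} [MeasurableSpace α] (μ : Measure α)
    [IsFiniteMeasure μ] (f : α → ℝ) (hsq : Integrable (fun x => f x ^ 2) μ) :
    ∫ x, f x ∂μ ≤ Real.sqrt (μ Set.univ).toReal * Real.sqrt (∫ x, f x ^ 2 ∂μ) := by
  by_cases hf : Integrable f μ
  · set A := (μ Set.univ).toReal with hA
    have hA0 : 0 ≤ A := ENNReal.toReal_nonneg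
    set B := ∫ x, f x ^ 2 ∂μ with hB
    have hB0 : 0 ≤ B := integral_nonneg fun x => sq_nonneg _
    rcases eq_or_lt_of_le hB0 with hB0' | hBpos
    · have hsq0 : (fun x => f x ^ 2) =ᵐ[μ] 0 :=
        (integral_eq_zero_iff_of_nonneg (fun x => sq_nonneg (f x)) hsq).mp hB0'.symm
      have hf0 : f =ᵐ[μ] 0 := by
        filter_upwards [hsq0] with x hx
        have hx' : f x ^ 2 = 0 := hx
        have : f x = 0 := by nlinarith [sq_nonneg (f x)]
        simpa using this
      rw [integral_congr_ae hf0]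
      simp
      positivity
    · rcases eq_or_lt_of_le hA0 with hA0' | hApos
      · have h1 : μ Set.univ = 0 := by
          have hfin := measure_ne_top μ Set.univ
          rcases (ENNReal.toReal_eq_zero_iff _).mp hA0'.symm with h | h
          · exact h
          · exact absurd h hfin
        have h2 : μ = 0 := Measure.measure_univ_eq_zero.mp h1
        simp [h2]
        positivity
      · set c := Real.sqrt B / Real.sqrt A with hc
        have hsa : 0 < Real.sqrt A := Real.sqrt_pos.mpr hApos
        have hsb : 0 < Real.sqrt B := Real.sqrt_pos.mpr hBpos
        have hcpos : 0 < c := div_pos hsb hsa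
        have key : ∀ x, f x ≤ c / 2 + f x ^ 2 / (2 * c) := by
          intro x
          rw [div_add_div _ _ two_ne_zero (by positivity), le_div_iff₀ (by positivity)]
          nlinarith [sq_nonneg (f x - c)]
        have hint : Integrable (fun x => c / 2 + f x ^ 2 / (2 * c)) μ :=
          (integrable_const _).add (hsq.div_const _)
        calc ∫ x, f x ∂μ ≤ ∫ x, (c / 2 + f x ^ 2 / (2 * c)) ∂μ :=
              integral_mono hf hint key
          _ = c / 2 * A + B / (2 * c) := by
              rw [integral_add (integrable_const _) (hsq.div_const _), integral_const,
                integral_div]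
              simp [smul_eq_mul, mul_comm]
              rfl
          _ = Real.sqrt A * Real.sqrt B := by
              have hA' : Real.sqrt A * Real.sqrt A = A := Real.mul_self_sqrt hA0
              have hB' : Real.sqrt B * Real.sqrt B = B := Real.mul_self_sqrt hB0
              rw [hc]
              field_simp
              nlinarith [hA', hB']
  · rw [integral_undef hf]
    positivity



/-- The "survival function" of the rescaled kernel. -/
noncomputable def Phi (K : ℝ → ℝ) (η t : ℝ) : ℝ := ∫ u in Set.Ici t, Kh K η u

section PhiFacts

variable {K : ℝ → ℝ} {η : ℝ}

lemma Kh_nonneg (hK0 : ∀ y, 0 ≤ K y) (hη : 0 < η) (x : ℝ) : 0 ≤ Kh K η x :=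
  mul_nonneg (inv_nonneg.mpr hη.le) (hK0 _)

lemma Kh_cont (hKc : Continuous K) : Continuous (Kh K η) :=
  continuous_const.mul (hKc.comp (continuous_id.div_const η))

lemma Kh_hcs (hKsupp : ∀ y, 1 < |y| → K y = 0) (hη : 0 < η) :
    HasCompactSupport (Kh K η) := by
  apply HasCompactSupport.intro (isCompact_Icc (a := -η) (b := η))
  intro x hx
  have h1 : η < |x| := by
    by_contra h
    exact hx (abs_le.mp (not_lt.mp h))
  have h2 : 1 < |x / η| := by
    rw [abs_div, abs_of_pos hη, lt_div_iff₀ hη, one_mul]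
    exact h1
  simp [Kh, hKsupp _ h2]

lemma Kh_integrable (hKc : Continuous K) (hKsupp : ∀ y, 1 < |y| → K y = 0) (hη : 0 < η) :
    Integrable (Kh K η) :=
  (Kh_cont hKc).integrable_of_hasCompactSupport (Kh_hcs hKsupp hη)

lemma Kh_integral (hKint : ∫ y, K y = 1) (hη : 0 < η) : ∫ x, Kh K η x = 1 := by
  simp only [Kh]
  rw [integral_const_mul, Measure.integral_comp_div K η, hKint, smul_eq_mul,
    abs_of_pos hη]
  field_simp

lemma Phi_nonneg (hK0 : ∀ y, 0 ≤ K y) (hη : 0 < η) (t : ℝ) : 0 ≤ Phi K η t :=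
  setIntegral_nonneg measurableSet_Ici fun x _ => Kh_nonneg hK0 hη x

lemma Phi_le_one (hK0 : ∀ y, 0 ≤ K y) (hKc : Continuous K)
    (hKsupp : ∀ y, 1 < |y| → K y = 0) (hKint : ∫ y, K y = 1) (hη : 0 < η) (t : ℝ) :
    Phi K η t ≤ 1 := by
  rw [← Kh_integral hKint hη]
  exact setIntegral_le_integral (Kh_integrable hKc hKsupp hη)
    (Filter.Eventually.of_forall (Kh_nonneg hK0 hη))

lemma Phi_continuous (hK0 : ∀ y, 0 ≤ K y) (hKc : Continuous K)
    (hKsupp : ∀ y, 1 < |y| → K y = 0) (hη : 0 < η) : Continuous (Phi K η) := by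
  obtain ⟨C, hC0, hC⟩ : ∃ C, 0 ≤ C ∧ ∀ x, Kh K η x ≤ C := by
    have hKcs : HasCompactSupport K := by
      apply HasCompactSupport.intro (isCompact_Icc (a := -(1:ℝ)) (b := 1))
      intro x hx
      exact hKsupp x (by by_contra h; exact hx (abs_le.mp (not_lt.mp h)))
    obtain ⟨z, hzmax⟩ := hKc.exists_forall_ge_of_hasCompactSupport hKcs
    refine ⟨η⁻¹ * K z, mul_nonneg (inv_nonneg.mpr hη.le) (hK0 z), fun x => ?_⟩
    exact mul_le_mul_of_nonneg_left (hzmax _) (inv_nonneg.mpr hη.le)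
  have key : ∀ a b : ℝ, a ≤ b → 0 ≤ Phi K η a - Phi K η b ∧
      Phi K η a - Phi K η b ≤ C * (b - a) := by
    intro a b hab
    have hsplit : Phi K η a = (∫ u in Set.Ico a b, Kh K η u) + Phi K η b := by
      rw [Phi, Phi, ← setIntegral_union ?hd measurableSet_Ici
        ((Kh_integrable hKc hKsupp hη).integrableOn) ((Kh_integrable hKc hKsupp hη).integrableOn),
        Set.Ico_union_Ici_eq_Ici hab]
      case hd => exact Set.disjoint_left.mpr fun x hx hx' => absurd hx' (not_le.mpr hx.2)
    have h1 : 0 ≤ ∫ u in Set.Ico a b, Kh K η u :=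
      setIntegral_nonneg measurableSet_Ico fun x _ => Kh_nonneg hK0 hη x
    have h2 : ∫ u in Set.Ico a b, Kh K η u ≤ C * (b - a) := by
      have hnorm := norm_setIntegral_le_of_norm_le_const (μ := volume) (s := Set.Ico a b)
        (f := Kh K η) (C := C) (by rw [Real.volume_Ico]; exact ENNReal.ofReal_lt_top)
        (fun x _ => by rw [Real.norm_eq_abs, abs_of_nonneg (Kh_nonneg hK0 hη x)]; exact hC x)
      rw [measureReal_def, Real.volume_Ico, ENNReal.toReal_ofReal (by linarith)] at hnorm
      exact (le_abs_self _).trans hnorm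
    constructor
    · linarith [hsplit, h1]
    · linarith [hsplit, h2]
  have hlip : LipschitzWith (Real.toNNReal C) (Phi K η) := by
    apply LipschitzWith.of_dist_le_mul
    intro a b
    rw [Real.dist_eq, Real.dist_eq, Real.coe_toNNReal C hC0]
    rcases le_total a b with h | h
    · obtain ⟨h1, h2⟩ := key a b h
      have hab : |a - b| = b - a := by rw [abs_sub_comm]; exact abs_of_nonneg (by linarith)
      rw [abs_of_nonneg h1, hab]; exact h2
    · obtain ⟨h1, h2⟩ := key b a h
      have hab : |a - b| = a - b := abs_of_nonneg (by linarith)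
      rw [abs_sub_comm, abs_of_nonneg h1, hab]; exact h2
  exact hlip.continuous

lemma inner_eq_Phi (K : ℝ → ℝ) (η c w : ℝ) :
    (∫ y in Set.Iic (-w), Kh K η (-c - y)) = Phi K η (w - c) := by
  rw [integral_Iic_comp_sub (Kh K η) (-c) (-w)]
  have : -c - -w = w - c := by ring
  rw [this, Phi]

lemma binvEst_eq (K : ℝ → ℝ) (l₀ r₀ ε h : ℝ) (g : ℝ → ℝ) (w : ℝ) :
    binvEst K l₀ r₀ ε h g w =
      (l₀ - 2 * ε) + ∫ z in Set.Icc (l₀ - 2 * ε) (r₀ + 2 * ε), Phi K h (w - g z) := by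
  rw [binvEst]
  congr 1
  exact integral_congr_ae (Filter.Eventually.of_forall fun z => inner_eq_Phi K h (g z) w)

lemma monoEst_eq (K : ℝ → ℝ) (l₀ r₀ ε ℓ h lo hi : ℝ) (g : ℝ → ℝ) (x : ℝ) :
    monoEst K l₀ r₀ ε ℓ h lo hi g x =
      lo + ∫ z in lo..hi, Phi K ℓ (x - binvEst K l₀ r₀ ε h g z) := by
  rw [monoEst]
  congr 1
  exact intervalIntegral.integral_congr fun z _ => inner_eq_Phi K ℓ (binvEst K l₀ r₀ ε h g z) x

section Main
variable {K : ℝ → ℝ}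

lemma monoEst_abs_le (hK0 : ∀ y, 0 ≤ K y) (hKc : Continuous K)
    (hKsupp : ∀ y, 1 < |y| → K y = 0) (hKint : ∫ y, K y = 1) {ℓ : ℝ} (hℓ : 0 < ℓ) (l₀ r₀ ε h lo hi : ℝ) (g : ℝ → ℝ) (x : ℝ) :
    |monoEst K l₀ r₀ ε ℓ h lo hi g x| ≤ |lo| + |hi - lo| := by
  rw [monoEst_eq]
  refine (abs_add_le _ _).trans ?_
  refine add_le_add_right ?_ |lo|
  have hb := intervalIntegral.norm_integral_le_of_norm_le_const (a := lo) (b := hi) (C := 1)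
    (f := fun z => Phi K ℓ (x - binvEst K l₀ r₀ ε h g z)) (fun z _ => by
      rw [Real.norm_eq_abs]
      exact abs_le.mpr ⟨by linarith [Phi_nonneg hK0 hℓ (x - binvEst K l₀ r₀ ε h g z)],
        Phi_le_one hK0 hKc hKsupp hKint hℓ _⟩)
  rw [Real.norm_eq_abs, one_mul] at hb
  exact hb

set_option maxHeartbeats 1000000 in
/-- Measurability of the inverse estimator, parametrized. -/
lemma binvEst_meas (hK0 : ∀ y, 0 ≤ K y) (hKc : Continuous K)
    (hKsupp : ∀ y, 1 < |y| → K y = 0) {Ω : Type} [MeasurableSpace Ω] (bhat : Ω → ℝ → ℝ)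
    (hbhat : Measurable (Function.uncurry bhat)) {h : ℝ} (hh : 0 < h) (l₀ r₀ ε : ℝ)
    {α : Type} [MeasurableSpace α] (u : α → ℝ) (v : α → Ω)
    (hu : Measurable u) (hv : Measurable v) :
    Measurable fun a => binvEst K l₀ r₀ ε h (bhat (v a)) (u a) := by
  have heq : (fun a => binvEst K l₀ r₀ ε h (bhat (v a)) (u a)) = fun a =>
      (l₀ - 2 * ε) + ∫ z in Set.Icc (l₀ - 2 * ε) (r₀ + 2 * ε), Phi K h (u a - bhat (v a) z) :=
    funext fun a => binvEst_eq K l₀ r₀ ε h (bhat (v a)) (u a)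
  rw [heq]
  apply Measurable.add measurable_const
  have hsm : StronglyMeasurable (fun p : α × ℝ => Phi K h (u p.1 - bhat (v p.1) p.2)) :=
    ((Phi_continuous hK0 hKc hKsupp hh).measurable.comp ((hu.comp measurable_fst).sub
      (hbhat.comp ((hv.comp measurable_fst).prodMk measurable_snd)))).stronglyMeasurable
  exact (hsm.integral_prod_right'
    (ν := volume.restrict (Set.Icc (l₀ - 2 * ε) (r₀ + 2 * ε)))).measurable

set_option maxHeartbeats 1000000 in
/-- Joint strong measurability of the estimator for fixed bandwidths, parametrized. -/
lemma monoEst_meas (hK0 : ∀ y, 0 ≤ K y) (hKc : Continuous K)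
    (hKsupp : ∀ y, 1 < |y| → K y = 0) {Ω : Type} [MeasurableSpace Ω] (bhat : Ω → ℝ → ℝ)
    (hbhat : Measurable (Function.uncurry bhat)) {ℓ h : ℝ} (hℓ : 0 < ℓ) (hh : 0 < h)
    (l₀ r₀ ε lo hi : ℝ) {α : Type} [MeasurableSpace α] (u : α → ℝ) (v : α → Ω)
    (hu : Measurable u) (hv : Measurable v) :
    Measurable fun a => monoEst K l₀ r₀ ε ℓ h lo hi (bhat (v a)) (u a) := by
  have heq : (fun a => monoEst K l₀ r₀ ε ℓ h lo hi (bhat (v a)) (u a)) = fun a =>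
      lo + ((∫ z in Set.Ioc lo hi, Phi K ℓ (u a - binvEst K l₀ r₀ ε h (bhat (v a)) z))
        - ∫ z in Set.Ioc hi lo, Phi K ℓ (u a - binvEst K l₀ r₀ ε h (bhat (v a)) z)) := by
    funext a
    rw [monoEst_eq]
    rfl
  rw [heq]
  have hβm : Measurable (fun p : α × ℝ => binvEst K l₀ r₀ ε h (bhat (v p.1)) p.2) :=
    binvEst_meas hK0 hKc hKsupp bhat hbhat hh l₀ r₀ ε (fun p : α × ℝ => p.2)
      (fun p => v p.1) measurable_snd (hv.comp measurable_fst)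
  have hsm : StronglyMeasurable
      (fun p : α × ℝ => Phi K ℓ (u p.1 - binvEst K l₀ r₀ ε h (bhat (v p.1)) p.2)) :=
    ((Phi_continuous hK0 hKc hKsupp hℓ).measurable.comp
      ((hu.comp measurable_fst).sub hβm)).stronglyMeasurable
  apply Measurable.add measurable_const
  exact ((hsm.integral_prod_right' (ν := volume.restrict (Set.Ioc lo hi))).measurable).sub
    ((hsm.integral_prod_right' (ν := volume.restrict (Set.Ioc hi lo))).measurable)
end Main
set_option maxHeartbeats 1000000 in
/-- Proposition 2.6: `L¹`-risk bound for the adaptive estimator `b̂_{ℓ̂,ĥ}`. -/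
theorem stmt3 (l₀ r₀ ε mb : ℝ) (K b b' binv : ℝ → ℝ)
    (hlr : l₀ < r₀) (hε : 0 < ε) (hε1 : ε ≤ 1) (hmb : 0 < mb)
    -- kernel assumptions
    (hK0 : ∀ y, 0 ≤ K y) (hK2 : ContDiff ℝ 2 K) (hKsymm : ∀ y, K (-y) = K y)
    (hKsupp : ∀ y, 1 < |y| → K y = 0) (hKint : ∫ y, K y = 1)
    -- `b` is continuously differentiable on `I_{2ε}` with `b' ≤ -mb` there
    (hbd : ∀ x ∈ Set.Icc (l₀ - 2 * ε) (r₀ + 2 * ε), HasDerivAt b (b' x) x)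
    (hb'c : ContinuousOn b' (Set.Icc (l₀ - 2 * ε) (r₀ + 2 * ε)))
    (hb'le : ∀ x ∈ Set.Icc (l₀ - 2 * ε) (r₀ + 2 * ε), b' x ≤ -mb)
    -- `binv` is the inverse of `b` on `I_{2ε}`
    (hbinv : ∀ x ∈ Set.Icc (l₀ - 2 * ε) (r₀ + 2 * ε), binv (b x) = x)
    -- the probability space and the estimator `b̂`
    (Ω : Type) [MeasurableSpace Ω] (P : Measure Ω) [IsProbabilityMeasure P]
    (bhat : Ω → ℝ → ℝ) (hbhat : Measurable (Function.uncurry bhat))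
    (hsq : ∀ x ∈ Set.Icc (l₀ - 2 * ε) (r₀ + 2 * ε),
      Integrable (fun ω => |bhat ω x - b x| ^ 2) P)
    (hRint : IntegrableOn (fun x => ∫ ω, |bhat ω x - b x| ^ 2 ∂P)
      (Set.Icc (l₀ - 2 * ε) (r₀ + 2 * ε)))
    -- the bandwidths set `𝔥_b`, a nonempty finite subset of `(0, min{1, m_b} ε)`
    (𝔥 : Finset ℝ) (h𝔥ne : 𝔥.Nonempty) (h𝔥 : ∀ u ∈ 𝔥, u ∈ Set.Ioo 0 (min 1 mb * ε))
    -- a measurable selection `(ℓ̂, ĥ)` of a minimizer of the bandwidths selection criterion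
    (lhat hhat : Ω → ℝ)
    (hlmeas : Measurable lhat) (hhmeas : Measurable hhat)
    (hmem : ∀ ω, lhat ω ∈ 𝔥 ∧ hhat ω ∈ 𝔥)
    (hargmin : ∀ ω, ∀ ℓ ∈ 𝔥, ∀ h ∈ 𝔥,
      (∫ x in Set.Icc l₀ r₀,
        |monoEst K l₀ r₀ ε (lhat ω) (hhat ω) (b (r₀ + ε)) (b (l₀ - ε)) (bhat ω) x
          - bhat ω x|) ≤
      ∫ x in Set.Icc l₀ r₀,
        |monoEst K l₀ r₀ ε ℓ h (b (r₀ + ε)) (b (l₀ - ε)) (bhat ω) x - bhat ω x|) :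
    (∫ x in Set.Icc l₀ r₀, ∫ ω,
        |monoEst K l₀ r₀ ε (lhat ω) (hhat ω) (b (r₀ + ε)) (b (l₀ - ε)) (bhat ω) x
          - b x| ∂P) ≤
      (𝔥 ×ˢ 𝔥).inf' (h𝔥ne.product h𝔥ne) (fun p =>
        ∫ x in Set.Icc l₀ r₀, ∫ ω,
          |monoEst K l₀ r₀ ε p.1 p.2 (b (r₀ + ε)) (b (l₀ - ε)) (bhat ω) x - b x| ∂P) +
      2 * Real.sqrt (r₀ - l₀) *
        Real.sqrt (∫ x in Set.Icc (l₀ - 2 * ε) (r₀ + 2 * ε),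
          ∫ ω, |bhat ω x - b x| ^ 2 ∂P) := by
  have hKc : Continuous K := hK2.continuous
  have hpos : ∀ u ∈ 𝔥, 0 < u := fun u hu => (h𝔥 u hu).1
  set s : Set ℝ := Set.Icc l₀ r₀ with hs_def
  set big : Set ℝ := Set.Icc (l₀ - 2 * ε) (r₀ + 2 * ε) with hbig_def
  set lo := b (r₀ + ε) with hlo_def
  set hi := b (l₀ - ε) with hhi_def
  set π : Measure (ℝ × Ω) := (volume.restrict s).prod P with hπ_def
  have hsub : s ⊆ big := Set.Icc_subset_Icc (by linarith) (by linarith)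
  have hsmeas : MeasurableSet s := measurableSet_Icc
  set M := |lo| + |hi - lo| with hM_def
  -- uniform bound on the monotone estimators
  have hMb : ∀ {ℓ : ℝ}, 0 < ℓ → ∀ (h : ℝ) (g : ℝ → ℝ) (x : ℝ),
      |monoEst K l₀ r₀ ε ℓ h lo hi g x| ≤ M :=
    fun {ℓ} hℓ h g x => monoEst_abs_le hK0 hKc hKsupp hKint hℓ l₀ r₀ ε h lo hi g x
  -- bound on b over s
  have hbc : ContinuousOn b s := fun x hx => (hbd x (hsub hx)).continuousAt.continuousWithinAt
  obtain ⟨B, hB⟩ : ∃ B, ∀ x ∈ s, |b x| ≤ B := isCompact_Icc.exists_bound_of_continuousOn hbc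
  -- a.e. membership in the product
  have hmemae : ∀ᵐ q : ℝ × Ω ∂π, q.1 ∈ s := by
    rw [Filter.eventually_iff, mem_ae_iff]
    have hcompl : {q : ℝ × Ω | q.1 ∈ s}ᶜ = (sᶜ ×ˢ (Set.univ : Set Ω)) := by
      ext q; simp
    rw [hcompl, hπ_def, Measure.prod_prod, Measure.restrict_apply hsmeas.compl]
    simp
  -- measurability of `b` and the basic error
  have hbsm : AEStronglyMeasurable (fun q : ℝ × Ω => b q.1) π :=
    (hbc.aemeasurable hsmeas).aestronglyMeasurable.comp_fst
  have hbhatm : Measurable (fun q : ℝ × Ω => bhat q.2 q.1) :=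
    hbhat.comp (measurable_snd.prodMk measurable_fst)
  have hWsm : AEStronglyMeasurable (fun q : ℝ × Ω => bhat q.2 q.1 - b q.1) π :=
    hbhatm.aestronglyMeasurable.sub hbsm
  have hWsqsm : AEStronglyMeasurable (fun q : ℝ × Ω => |bhat q.2 q.1 - b q.1| ^ 2) π := by
    have : Continuous fun t : ℝ => |t| ^ 2 := (continuous_abs).pow 2
    exact this.comp_aestronglyMeasurable hWsm
  -- integrability of the squared error on the product
  have hRints : IntegrableOn (fun x => ∫ ω, |bhat ω x - b x| ^ 2 ∂P) s := hRint.mono_set hsub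
  have hWsq : Integrable (fun q : ℝ × Ω => |bhat q.2 q.1 - b q.1| ^ 2) π := by
    rw [hπ_def, integrable_prod_iff hWsqsm]
    constructor
    · filter_upwards [ae_restrict_mem hsmeas] with x hx
      exact hsq x (hsub hx)
    · have heqn : (fun x => ∫ ω, ‖|bhat ω x - b x| ^ 2‖ ∂P)
          = fun x => ∫ ω, |bhat ω x - b x| ^ 2 ∂P := by
        funext x; congr 1; funext ω
        exact Real.norm_of_nonneg (by positivity)
      rw [heqn]
      exact hRints
  -- integrability of the error on the product
  have hWint : Integrable (fun q : ℝ × Ω => bhat q.2 q.1 - b q.1) π := by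
    refine ((integrable_const (1 : ℝ)).add hWsq).mono' hWsm
      (Filter.Eventually.of_forall fun q => ?_)
    simp only [Pi.add_apply]
    rw [Real.norm_eq_abs]
    nlinarith [sq_nonneg (|bhat q.2 q.1 - b q.1| - 1), abs_nonneg (bhat q.2 q.1 - b q.1)]
  -- integrability of `b` and `bhat`
  have hbint : Integrable (fun q : ℝ × Ω => b q.1) π := by
    refine (integrable_const B).mono' hbsm ?_
    filter_upwards [hmemae] with q hq
    rw [Real.norm_eq_abs]
    exact hB q.1 hq
  have hbhatint : Integrable (fun q : ℝ × Ω => bhat q.2 q.1) π := by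
    have heq : (fun q : ℝ × Ω => bhat q.2 q.1)
        = fun q : ℝ × Ω => (bhat q.2 q.1 - b q.1) + b q.1 := by
      funext q; ring
    rw [heq]
    exact hWint.add hbint
  -- measurability and integrability of the fixed-bandwidth estimators
  have hmmeas : ∀ ℓ ∈ 𝔥, ∀ h ∈ 𝔥,
      Measurable (fun q : ℝ × Ω => monoEst K l₀ r₀ ε ℓ h lo hi (bhat q.2) q.1) :=
    fun ℓ hℓ h hh => monoEst_meas hK0 hKc hKsupp bhat hbhat (hpos ℓ hℓ) (hpos h hh)
      l₀ r₀ ε lo hi Prod.fst Prod.snd measurable_fst measurable_snd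
  have hmint : ∀ ℓ ∈ 𝔥, ∀ h ∈ 𝔥,
      Integrable (fun q : ℝ × Ω => monoEst K l₀ r₀ ε ℓ h lo hi (bhat q.2) q.1) π := by
    intro ℓ hℓ h hh
    refine (integrable_const M).mono' ((hmmeas ℓ hℓ h hh).aestronglyMeasurable)
      (Filter.Eventually.of_forall fun q => ?_)
    rw [Real.norm_eq_abs]
    exact hMb (hpos ℓ hℓ) h (bhat q.2) q.1
  -- measurability and integrability of the adaptive estimator
  have hhatmeas : Measurable
      (fun q : ℝ × Ω => monoEst K l₀ r₀ ε (lhat q.2) (hhat q.2) lo hi (bhat q.2) q.1) := by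
    have heq : (fun q : ℝ × Ω => monoEst K l₀ r₀ ε (lhat q.2) (hhat q.2) lo hi (bhat q.2) q.1)
        = fun q => ∑ p ∈ 𝔥 ×ˢ 𝔥, if (lhat q.2, hhat q.2) = p then
            monoEst K l₀ r₀ ε p.1 p.2 lo hi (bhat q.2) q.1 else 0 := by
      funext q
      rw [Finset.sum_ite_eq (𝔥 ×ˢ 𝔥) (lhat q.2, hhat q.2)
        (fun p => monoEst K l₀ r₀ ε p.1 p.2 lo hi (bhat q.2) q.1),
        if_pos (Finset.mem_product.mpr ⟨(hmem q.2).1, (hmem q.2).2⟩)]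
    rw [heq]
    apply Finset.measurable_sum
    intro p hp
    have hset : MeasurableSet {q : ℝ × Ω | (lhat q.2, hhat q.2) = p} :=
      ((hlmeas.comp measurable_snd).prodMk (hhmeas.comp measurable_snd))
        (measurableSet_singleton p)
    exact Measurable.ite hset
      (hmmeas p.1 (Finset.mem_product.mp hp).1 p.2 (Finset.mem_product.mp hp).2)
      measurable_const
  have hhatint : Integrable
      (fun q : ℝ × Ω => monoEst K l₀ r₀ ε (lhat q.2) (hhat q.2) lo hi (bhat q.2) q.1) π := by
    refine (integrable_const M).mono' hhatmeas.aestronglyMeasurable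
      (Filter.Eventually.of_forall fun q => ?_)
    rw [Real.norm_eq_abs]
    exact hMb (hpos _ (hmem q.2).1) _ (bhat q.2) q.1
  -- abbreviations for the five product-level integrals
  have habs : ∀ f g : ℝ × Ω → ℝ, Integrable f π → Integrable g π →
      Integrable (fun q => |f q - g q|) π := fun f g hf hg => (hf.sub hg).abs
  -- D : error of bhat
  set D := ∫ q, |bhat q.2 q.1 - b q.1| ∂π with hD_def
  have hD0 : 0 ≤ D := integral_nonneg fun q => abs_nonneg _
  -- triangle inequality at the product level
  have htri : ∀ f : ℝ × Ω → ℝ, Integrable f π →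
      (∫ q, |f q - b q.1| ∂π) ≤ (∫ q, |f q - bhat q.2 q.1| ∂π) + D ∧
      (∫ q, |f q - bhat q.2 q.1| ∂π) ≤ (∫ q, |f q - b q.1| ∂π) + D := by
    intro f hf
    have h1 : Integrable (fun q => |f q - b q.1|) π := habs _ _ hf hbint
    have h2 : Integrable (fun q => |f q - bhat q.2 q.1|) π := habs _ _ hf hbhatint
    have h3 : Integrable (fun q : ℝ × Ω => |bhat q.2 q.1 - b q.1|) π := hWint.abs
    constructor
    · calc (∫ q, |f q - b q.1| ∂π)
          ≤ ∫ q, (|f q - bhat q.2 q.1| + |bhat q.2 q.1 - b q.1|) ∂π :=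
            integral_mono h1 (h2.add h3) fun q => abs_sub_le _ _ _
        _ = (∫ q, |f q - bhat q.2 q.1| ∂π) + D := integral_add h2 h3
    · calc (∫ q, |f q - bhat q.2 q.1| ∂π)
          ≤ ∫ q, (|f q - b q.1| + |bhat q.2 q.1 - b q.1|) ∂π := by
            refine integral_mono h2 (h1.add h3) fun q => ?_
            have := abs_sub_le (f q) (b q.1) (bhat q.2 q.1)
            rw [abs_sub_comm (b q.1) (bhat q.2 q.1)] at this
            exact this
        _ = (∫ q, |f q - b q.1| ∂π) + D := integral_add h1 h3
  -- bound on D via Cauchy-Schwarz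
  have hDbound : D ≤ Real.sqrt (r₀ - l₀) *
      Real.sqrt (∫ x in big, ∫ ω, |bhat ω x - b x| ^ 2 ∂P) := by
    have hf0 : ∀ x, 0 ≤ ∫ ω, |bhat ω x - b x| ^ 2 ∂P :=
      fun x => integral_nonneg fun ω => by positivity
    have hDeq : D = ∫ x in s, ∫ ω, |bhat ω x - b x| ∂P :=
      integral_prod _ hWint.abs
    have hD1 : (∫ x in s, ∫ ω, |bhat ω x - b x| ∂P)
        ≤ ∫ x in s, Real.sqrt (∫ ω, |bhat ω x - b x| ^ 2 ∂P) := by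
      refine integral_mono_of_nonneg
        (Filter.Eventually.of_forall fun x => integral_nonneg fun ω => abs_nonneg _) ?_ ?_
      · have hsm' : AEStronglyMeasurable (fun x => ∫ ω, |bhat ω x - b x| ^ 2 ∂P)
            (volume.restrict s) := hRints.aestronglyMeasurable
        refine ((integrable_const (1 : ℝ)).add hRints).mono'
          (Real.continuous_sqrt.comp_aestronglyMeasurable hsm')
          (Filter.Eventually.of_forall fun x => ?_)
        simp only [Pi.add_apply]
        rw [Real.norm_eq_abs, abs_of_nonneg (Real.sqrt_nonneg _)]
        nlinarith [Real.sq_sqrt (hf0 x), Real.sqrt_nonneg (∫ ω, |bhat ω x - b x| ^ 2 ∂P)]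
      · filter_upwards [ae_restrict_mem hsmeas] with x hx
        have hcs := integral_le_sqrt_mul_sqrt P (fun ω => |bhat ω x - b x|)
          (hsq x (hsub hx))
        rw [measure_univ] at hcs
        simpa using hcs
    have hD2 : (∫ x in s, Real.sqrt (∫ ω, |bhat ω x - b x| ^ 2 ∂P))
        ≤ Real.sqrt (r₀ - l₀) *
          Real.sqrt (∫ x in s, ∫ ω, |bhat ω x - b x| ^ 2 ∂P) := by
      have hsqeq : (fun x => Real.sqrt (∫ ω, |bhat ω x - b x| ^ 2 ∂P) ^ 2)
          = fun x => ∫ ω, |bhat ω x - b x| ^ 2 ∂P :=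
        funext fun x => Real.sq_sqrt (hf0 x)
      have hsqint : Integrable (fun x => Real.sqrt (∫ ω, |bhat ω x - b x| ^ 2 ∂P) ^ 2)
          (volume.restrict s) := by
        rw [hsqeq]; exact hRints
      have hres := integral_le_sqrt_mul_sqrt (volume.restrict s)
        (fun x => Real.sqrt (∫ ω, |bhat ω x - b x| ^ 2 ∂P)) hsqint
      rw [Measure.restrict_apply_univ] at hres
      have hvol : (volume s).toReal = r₀ - l₀ := by
        rw [hs_def, Real.volume_Icc, ENNReal.toReal_ofReal (by linarith)]
      rw [hvol] at hres
      calc (∫ x in s, Real.sqrt (∫ ω, |bhat ω x - b x| ^ 2 ∂P)) ≤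
            Real.sqrt (r₀ - l₀) *
              Real.sqrt (∫ x in s, Real.sqrt (∫ ω, |bhat ω x - b x| ^ 2 ∂P) ^ 2) := hres
        _ = Real.sqrt (r₀ - l₀) *
              Real.sqrt (∫ x in s, ∫ ω, |bhat ω x - b x| ^ 2 ∂P) := by rw [hsqeq]
    have hD3 : (∫ x in s, ∫ ω, |bhat ω x - b x| ^ 2 ∂P)
        ≤ ∫ x in big, ∫ ω, |bhat ω x - b x| ^ 2 ∂P :=
      setIntegral_mono_set hRint (Filter.Eventually.of_forall fun x => hf0 x)
        (HasSubset.Subset.eventuallyLE hsub)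
    calc D = ∫ x in s, ∫ ω, |bhat ω x - b x| ∂P := hDeq
      _ ≤ ∫ x in s, Real.sqrt (∫ ω, |bhat ω x - b x| ^ 2 ∂P) := hD1
      _ ≤ Real.sqrt (r₀ - l₀) *
            Real.sqrt (∫ x in s, ∫ ω, |bhat ω x - b x| ^ 2 ∂P) := hD2
      _ ≤ Real.sqrt (r₀ - l₀) *
            Real.sqrt (∫ x in big, ∫ ω, |bhat ω x - b x| ^ 2 ∂P) :=
          mul_le_mul_of_nonneg_left (Real.sqrt_le_sqrt hD3) (Real.sqrt_nonneg _)
  -- the argmin step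
  obtain ⟨p₀, hp₀mem, hp₀eq⟩ := Finset.exists_mem_eq_inf' (h𝔥ne.product h𝔥ne)
    (fun p => ∫ x in s, ∫ ω, |monoEst K l₀ r₀ ε p.1 p.2 lo hi (bhat ω) x - b x| ∂P)
  have hp₀1 : p₀.1 ∈ 𝔥 := (Finset.mem_product.mp hp₀mem).1
  have hp₀2 : p₀.2 ∈ 𝔥 := (Finset.mem_product.mp hp₀mem).2
  have hargstep :
      (∫ q, |monoEst K l₀ r₀ ε (lhat q.2) (hhat q.2) lo hi (bhat q.2) q.1 - bhat q.2 q.1| ∂π)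
      ≤ ∫ q, |monoEst K l₀ r₀ ε p₀.1 p₀.2 lo hi (bhat q.2) q.1 - bhat q.2 q.1| ∂π := by
    have hFhat : Integrable
        (fun q : ℝ × Ω => |monoEst K l₀ r₀ ε (lhat q.2) (hhat q.2) lo hi (bhat q.2) q.1
          - bhat q.2 q.1|) π := habs _ _ hhatint hbhatint
    have hFp : Integrable
        (fun q : ℝ × Ω => |monoEst K l₀ r₀ ε p₀.1 p₀.2 lo hi (bhat q.2) q.1
          - bhat q.2 q.1|) π := habs _ _ (hmint p₀.1 hp₀1 p₀.2 hp₀2) hbhatint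
    calc (∫ q, |monoEst K l₀ r₀ ε (lhat q.2) (hhat q.2) lo hi (bhat q.2) q.1
            - bhat q.2 q.1| ∂π)
        = ∫ ω, (∫ x in s,
            |monoEst K l₀ r₀ ε (lhat ω) (hhat ω) lo hi (bhat ω) x - bhat ω x|) ∂P :=
          integral_prod_symm _ hFhat
      _ ≤ ∫ ω, (∫ x in s,
            |monoEst K l₀ r₀ ε p₀.1 p₀.2 lo hi (bhat ω) x - bhat ω x|) ∂P := by
          refine integral_mono_of_nonneg
            (Filter.Eventually.of_forall fun ω => integral_nonneg fun x => abs_nonneg _)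
            ?_ (Filter.Eventually.of_forall fun ω => hargmin ω p₀.1 hp₀1 p₀.2 hp₀2)
          exact ((hmint p₀.1 hp₀1 p₀.2 hp₀2).sub hbhatint).integral_norm_prod_right
      _ = ∫ q, |monoEst K l₀ r₀ ε p₀.1 p₀.2 lo hi (bhat q.2) q.1 - bhat q.2 q.1| ∂π :=
          (integral_prod_symm _ hFp).symm
  -- identify the iterated integrals with the product integrals
  have hgoalEq : (∫ x in s, ∫ ω,
      |monoEst K l₀ r₀ ε (lhat ω) (hhat ω) lo hi (bhat ω) x - b x| ∂P) =
      ∫ q, |monoEst K l₀ r₀ ε (lhat q.2) (hhat q.2) lo hi (bhat q.2) q.1 - b q.1| ∂π :=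
    (integral_prod _ (habs _ _ hhatint hbint)).symm
  have hp₀Eq : (∫ x in s, ∫ ω,
      |monoEst K l₀ r₀ ε p₀.1 p₀.2 lo hi (bhat ω) x - b x| ∂P) =
      ∫ q, |monoEst K l₀ r₀ ε p₀.1 p₀.2 lo hi (bhat q.2) q.1 - b q.1| ∂π :=
    (integral_prod _ (habs _ _ (hmint p₀.1 hp₀1 p₀.2 hp₀2) hbint)).symm
  -- assemble
  obtain ⟨ht1, -⟩ := htri _ hhatint
  obtain ⟨-, ht2⟩ := htri _ (hmint p₀.1 hp₀1 p₀.2 hp₀2)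
  rw [hgoalEq, hp₀eq]
  beta_reduce
  rw [hp₀Eq]
  have h2D : 0 ≤ Real.sqrt (r₀ - l₀) *
      Real.sqrt (∫ x in big, ∫ ω, |bhat ω x - b x| ^ 2 ∂P) :=
    mul_nonneg (Real.sqrt_nonneg _) (Real.sqrt_nonneg _)
  linarith [ht1, hargstep, ht2, hDbound]
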